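/- arXiv:1312.5866 — 7 statements merged into one kernel-verified Lean document; each statement's English description precedes it below -/
import Mathlib

section
/- Let ψ : [0,R] → ℝ be continuous, positive on (0,R), and let φ(r) := ∫₀^r ψ(s) ds. Suppose S := sup_{(0,R)} φ/ψ < ∞. Then for every C¹ function φ̃ : [0,R] → ℝ with φ̃(0)=φ̃(R)=0, one has ∫₀^R φ̃'(r)² ψ(r) dr ≥ (1/(4S²)) ∫₀^R φ̃(r)² ψ(r) dr. -/
open Set intervalIntegral Filter Topology

/-- Weighted Poincaré inequality: if `ψ` is continuous on `[0,R]`, positive on `(0,R)`,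
`φ(r) = ∫₀^r ψ`, and `φ/ψ ≤ S` on `(0,R)` with `S > 0`, then for every `C¹` function
`v` on `[0,R]` vanishing at both endpoints,
`∫₀^R v'² ψ ≥ (1/(4S²)) ∫₀^R v² ψ`. -/
theorem stmt_2 (R : ℝ) (hR : 0 < R) (ψ : ℝ → ℝ)
    (hψC : ContinuousOn ψ (Icc 0 R))
    (hψpos : ∀ r ∈ Ioo 0 R, 0 < ψ r)
    (S : ℝ) (hS : 0 < S)
    (hSsup : ∀ r ∈ Ioo 0 R, (∫ s in (0:ℝ)..r, ψ s) / ψ r ≤ S)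
    (v : ℝ → ℝ) (hv : ContDiffOn ℝ 1 v (Icc 0 R))
    (hv0 : v 0 = 0) (hvR : v R = 0) :
    (∫ r in (0:ℝ)..R, (deriv v r) ^ 2 * ψ r)
      ≥ (1 / (4 * S ^ 2)) * ∫ r in (0:ℝ)..R, (v r) ^ 2 * ψ r := by
  have hRle : (0:ℝ) ≤ R := hR.le
  set φ : ℝ → ℝ := fun r => ∫ s in (0:ℝ)..r, ψ s with hφdef
  set g : ℝ → ℝ := derivWithin v (Icc 0 R) with hgdef
  have huIcc : uIcc (0:ℝ) R = Icc 0 R := uIcc_of_le hRle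
  have hvc : ContinuousOn v (Icc 0 R) := hv.continuousOn
  have hgc : ContinuousOn g (Icc 0 R) :=
    hv.continuousOn_derivWithin (uniqueDiffOn_Icc hR) le_rfl
  -- ψ is nonnegative on the closed interval
  have hψnn : ∀ r ∈ Icc 0 R, 0 ≤ ψ r := by
    intro r hr
    have hcw : ContinuousWithinAt ψ (Ioo 0 R) r := (hψC r hr).mono Ioo_subset_Icc_self
    have hmemcl : r ∈ closure (Ioo 0 R) := by
      rw [closure_Ioo hR.ne]; exact hr
    have : (𝓝[Ioo 0 R] r).NeBot := mem_closure_iff_nhdsWithin_neBot.mp hmemcl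
    exact ge_of_tendsto hcw (eventually_mem_nhdsWithin.mono fun s hs => (hψpos s hs).le)
  -- continuity of the primitive
  have hφc : ContinuousOn φ (Icc 0 R) := by
    have := continuousOn_primitive_interval (a := (0:ℝ)) (b := R) (μ := MeasureTheory.volume)
      (f := ψ) (by rw [huIcc]; exact hψC.integrableOn_Icc)
    rwa [huIcc] at this
  -- derivative facts
  have hderiv : ∀ r ∈ Ioo 0 R, HasDerivAt v (g r) r := by
    intro r hr
    have hmem : Icc 0 R ∈ nhds r := Icc_mem_nhds hr.1 hr.2
    have hd : DifferentiableAt ℝ v r := (hv.contDiffAt hmem).differentiableAt one_ne_zero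
    rw [hgdef]
    simp only [derivWithin_of_mem_nhds hmem]
    exact hd.hasDerivAt
  have hφderiv : ∀ r ∈ Ioo 0 R, HasDerivAt φ (ψ r) r := by
    intro r hr
    have h1 : IntervalIntegrable ψ MeasureTheory.volume 0 r := by
      apply ContinuousOn.intervalIntegrable
      rw [uIcc_of_le hr.1.le]
      exact hψC.mono (Icc_subset_Icc le_rfl hr.2.le)
    exact intervalIntegral.integral_hasDerivAt_right h1
      ⟨Ioo 0 R, Ioo_mem_nhds hr.1 hr.2,
        (hψC.mono Ioo_subset_Icc_self).aestronglyMeasurable measurableSet_Ioo⟩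
      (hψC.continuousAt (Icc_mem_nhds hr.1 hr.2))
  -- nonnegativity and upper bound of φ
  have hφnn : ∀ r ∈ Icc 0 R, 0 ≤ φ r := by
    intro r hr
    exact intervalIntegral.integral_nonneg hr.1 fun u hu => hψnn u ⟨hu.1, hu.2.trans hr.2⟩
  have hφle : ∀ r ∈ Ioo 0 R, φ r ≤ S * ψ r := by
    intro r hr
    have := hSsup r hr
    rw [div_le_iff₀ (hψpos r hr)] at this
    exact this
  -- integrability
  have hI1 : IntervalIntegrable (fun r => v r ^ 2 * ψ r) MeasureTheory.volume 0 R := by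
    apply ContinuousOn.intervalIntegrable; rw [huIcc]; exact (hvc.pow 2).mul hψC
  have hI2 : IntervalIntegrable (fun r => 2 * v r * g r * φ r) MeasureTheory.volume 0 R := by
    apply ContinuousOn.intervalIntegrable; rw [huIcc]
    exact (((continuousOn_const.mul hvc).mul hgc)).mul hφc
  have hIg : IntervalIntegrable (fun r => g r ^ 2 * ψ r) MeasureTheory.volume 0 R := by
    apply ContinuousOn.intervalIntegrable; rw [huIcc]; exact (hgc.pow 2).mul hψC
  have hI3 : IntervalIntegrable
      (fun r => 2 * S ^ 2 * (g r ^ 2 * ψ r) + 2⁻¹ * (v r ^ 2 * ψ r))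
      MeasureTheory.volume 0 R :=
    (hIg.const_mul _).add (hI1.const_mul _)
  -- FTC for F = v² φ
  have hFTC : (∫ r in (0:ℝ)..R, (2 * v r * g r * φ r + v r ^ 2 * ψ r)) = 0 := by
    have hFc : ContinuousOn (fun r => v r ^ 2 * φ r) (Icc 0 R) := (hvc.pow 2).mul hφc
    have hFd : ∀ r ∈ Ioo 0 R,
        HasDerivAt (fun r => v r ^ 2 * φ r) (2 * v r * g r * φ r + v r ^ 2 * ψ r) r := by
      intro r hr
      have h2 := ((hderiv r hr).fun_pow 2).fun_mul (hφderiv r hr)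
      refine h2.congr_deriv ?_
      push_cast
      ring
    have hint : IntervalIntegrable (fun r => 2 * v r * g r * φ r + v r ^ 2 * ψ r)
        MeasureTheory.volume 0 R := hI2.add hI1
    rw [intervalIntegral.integral_eq_sub_of_hasDerivAt_of_le hRle hFc hFd hint]
    simp [hv0, hvR]
  have hAeq : (∫ r in (0:ℝ)..R, v r ^ 2 * ψ r)
      = ∫ r in (0:ℝ)..R, -(2 * v r * g r * φ r) := by
    rw [intervalIntegral.integral_neg]
    rw [intervalIntegral.integral_add hI2 hI1] at hFTC
    linarith
  -- a.e. pointwise bound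
  have hae : (fun r => -(2 * v r * g r * φ r))
      ≤ᵐ[MeasureTheory.volume.restrict (Icc 0 R)]
      fun r => 2 * S ^ 2 * (g r ^ 2 * ψ r) + 2⁻¹ * (v r ^ 2 * ψ r) := by
    have hnm : ∀ᵐ r ∂(MeasureTheory.volume : MeasureTheory.Measure ℝ),
        r ∉ ({0, R} : Set ℝ) :=
      ((Set.finite_singleton R).insert 0).countable.ae_notMem _
    filter_upwards [MeasureTheory.ae_restrict_mem measurableSet_Icc,
      MeasureTheory.ae_restrict_of_ae hnm] with r hr hr'
    simp only [Set.mem_insert_iff, Set.mem_singleton_iff, not_or] at hr'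
    have hrIoo : r ∈ Ioo 0 R := ⟨hr.1.lt_of_ne' hr'.1, hr.2.lt_of_ne hr'.2⟩
    have h1 : 0 ≤ φ r := hφnn r hr
    have h2 : φ r ≤ S * ψ r := hφle r hrIoo
    nlinarith [mul_nonneg h1 (sq_nonneg (2 * S * g r + v r)),
      mul_nonneg (sub_nonneg.2 h2) (sq_nonneg (2 * S * g r)),
      mul_nonneg (sub_nonneg.2 h2) (sq_nonneg (v r)), hS, sq_nonneg (2 * S * g r + v r)]
  have hmono := intervalIntegral.integral_mono_ae_restrict hRle hI2.neg hI3 hae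
  simp only [Pi.neg_apply] at hmono
  rw [← hAeq] at hmono
  rw [intervalIntegral.integral_add (hIg.const_mul _) (hI1.const_mul _),
    intervalIntegral.integral_const_mul, intervalIntegral.integral_const_mul] at hmono
  -- rewrite the goal's integrand using g
  have hgoal : (∫ r in (0:ℝ)..R, (deriv v r) ^ 2 * ψ r)
      = ∫ r in (0:ℝ)..R, g r ^ 2 * ψ r := by
    apply intervalIntegral.integral_congr_ae
    have hnm : ∀ᵐ r ∂(MeasureTheory.volume : MeasureTheory.Measure ℝ),
        r ∉ ({0, R} : Set ℝ) :=
      ((Set.finite_singleton R).insert 0).countable.ae_notMem _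
    filter_upwards [hnm] with r hr' hrI
    simp only [Set.mem_insert_iff, Set.mem_singleton_iff, not_or] at hr'
    rw [uIoc_of_le hRle] at hrI
    have hrIoo : r ∈ Ioo 0 R := ⟨hrI.1, hrI.2.lt_of_ne hr'.2⟩
    rw [hgdef]
    simp only [derivWithin_of_mem_nhds (Icc_mem_nhds hrIoo.1 hrIoo.2)]
  rw [hgoal, ge_iff_le, one_div, inv_mul_le_iff₀ (by positivity)]
  linarith
end

section
/- Let n ≥ 3 and ψ = sinh on (0,R). For every C¹ function ξ : [0,R] → ℝ with ξ(R)=0 and ξ·ψ^{(n-2)/2} extending continuously by 0 at r=0, one has ∫₀^R sinh(r)^{n-1} ξ'(r)² dr ≥ ((n-2)²/4) ∫₀^R sinh(r)^{n-3} ξ(r)² dr + H ∫₀^R sinh(r)^{n-1} ξ(r)² dr, where H = (1/4)( sinh²R/(cosh R - 1)² + n(n-2) ). -/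
open Set Filter

private lemma key_bracket (m A x : ℝ) (hA : 0 < A) (hx1 : 1 ≤ x) (hxA : x ≤ A + 1) :
    m^2 + ((A+2)/(4*A) + m^2 + m) * (x^2 - 1)
      ≤ 2*m*x*(m*x + (A+2)/(2*A)*(x-1)) + (m + (A+2)/(2*A))*(x^2-1)
        - (m*x + (A+2)/(2*A)*(x-1))^2 := by
  have hA' : A ≠ 0 := ne_of_gt hA
  have hkey : 2*m*x*(m*x + (A+2)/(2*A)*(x-1)) + (m + (A+2)/(2*A))*(x^2-1)
        - (m*x + (A+2)/(2*A)*(x-1))^2 - (m^2 + ((A+2)/(4*A) + m^2 + m) * (x^2 - 1))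
      = (A+2)*(x-1)*((A+1)-x)/(2*A^2) := by
    field_simp
    ring
  have h0 : 0 ≤ (A+2)*(x-1)*((A+1)-x)/(2*A^2) := by
    apply div_nonneg
    · apply mul_nonneg (mul_nonneg (by linarith) (by linarith)) (by linarith)
    · positivity
  linarith

set_option maxHeartbeats 1000000 in
/-- Improved weighted Hardy inequality in hyperbolic space: for `n ≥ 3` and any `C¹`
function `ξ` on `[0,R]` with `ξ(R) = 0` such that `ξ · sinh^{(n-2)/2}` extends
continuously by `0` at `r = 0`,
`∫₀^R sinh^{n-1} ξ'² ≥ ((n-2)²/4) ∫₀^R sinh^{n-3} ξ² + H ∫₀^R sinh^{n-1} ξ²`,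
where `H = (1/4)(sinh²R/(cosh R - 1)² + n(n-2))`. -/
theorem stmt_3 (n : ℕ) (hn : 3 ≤ n) (R : ℝ) (hR : 0 < R)
    (ξ : ℝ → ℝ) (hξ : ContDiffOn ℝ 1 ξ (Icc 0 R)) (hξR : ξ R = 0)
    (hext : Tendsto (fun r => ξ r * Real.sinh r ^ (((n : ℝ) - 2) / 2))
      (nhdsWithin 0 (Ioi 0)) (nhds 0)) :
    (∫ r in (0:ℝ)..R, Real.sinh r ^ (n - 1) * (deriv ξ r) ^ 2)
      ≥ (((n : ℝ) - 2) ^ 2 / 4) * (∫ r in (0:ℝ)..R, Real.sinh r ^ (n - 3) * (ξ r) ^ 2)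
        + (1 / 4) * (Real.sinh R ^ 2 / (Real.cosh R - 1) ^ 2 + (n : ℝ) * ((n : ℝ) - 2))
          * (∫ r in (0:ℝ)..R, Real.sinh r ^ (n - 1) * (ξ r) ^ 2) := by
  clear hext
  obtain ⟨k, rfl⟩ : ∃ k, n = 3 + k := ⟨n - 3, by omega⟩
  clear hn
  simp only [show 3 + k - 1 = k + 2 from by omega, show 3 + k - 3 = k from by omega]
  have hcoshR : 1 < Real.cosh R := by
    rw [show (1:ℝ) = Real.cosh 0 from (Real.cosh_zero).symm, Real.cosh_lt_cosh]
    simpa [abs_of_pos hR] using hR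
  set m : ℝ := ((k:ℝ) + 1)/2 with hm_def
  set A : ℝ := Real.cosh R - 1 with hA_def
  have hA : 0 < A := by rw [hA_def]; linarith
  have hA' : A ≠ 0 := ne_of_gt hA
  have hcoshA : Real.cosh R = A + 1 := by rw [hA_def]; ring
  set c : ℝ := (A+2)/(2*A) with hc_def
  set Hc : ℝ := (A+2)/(4*A) + m^2 + m with hHc_def
  have hgc1 : (((3+k : ℕ) : ℝ) - 2) ^ 2 / 4 = m^2 := by
    rw [hm_def]; push_cast; ring
  have hgc2 : (1 / 4 : ℝ) * (Real.sinh R ^ 2 / A ^ 2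
      + ((3+k:ℕ) : ℝ) * (((3+k:ℕ) : ℝ) - 2)) = Hc := by
    have hsq : Real.sinh R ^ 2 = A * (A + 2) := by
      rw [Real.sinh_sq, hcoshA]; ring
    rw [hsq, hHc_def, hm_def]
    field_simp
    push_cast
    ring
  -- auxiliary functions
  set T : ℝ → ℝ := fun r => m * Real.cosh r + c * (Real.cosh r - 1) with hT_def
  set W : ℝ → ℝ := fun r => Real.sinh r ^ (k+1) * T r with hW_def
  set Wd : ℝ → ℝ := fun r =>
    ((k:ℝ)+1) * Real.sinh r ^ k * Real.cosh r * T r + Real.sinh r ^ (k+1) * ((m + c) * Real.sinh r)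
    with hWd_def
  have hTderiv : ∀ r : ℝ, HasDerivAt T ((m + c) * Real.sinh r) r := by
    intro r
    have h1 := ((Real.hasDerivAt_cosh r).const_mul m)
    have h2 := (((Real.hasDerivAt_cosh r).sub_const 1).const_mul c)
    have h3 := h1.add h2
    exact h3.congr_deriv (by ring)
  have hWderiv : ∀ r : ℝ, HasDerivAt W (Wd r) r := by
    intro r
    have h1 : HasDerivAt (fun y => Real.sinh y ^ (k+1))
        (((k:ℝ)+1) * Real.sinh r ^ k * Real.cosh r) r := by
      have := (Real.hasDerivAt_sinh r).fun_pow (k+1)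
      simpa using this
    exact h1.mul (hTderiv r)
  have hWcont : Continuous W := by
    apply Continuous.mul
    · exact Real.continuous_sinh.pow _
    · exact ((continuous_const.mul Real.continuous_cosh).add
        (continuous_const.mul (Real.continuous_cosh.sub continuous_const)))
  have hWdcont : Continuous Wd := by
    apply Continuous.add
    · exact ((((continuous_const.mul (Real.continuous_sinh.pow k)).mul
        Real.continuous_cosh).mul
        ((continuous_const.mul Real.continuous_cosh).add
          (continuous_const.mul (Real.continuous_cosh.sub continuous_const)))))
    · exact (Real.continuous_sinh.pow _).mul (continuous_const.mul Real.continuous_sinh)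
  -- derivative of ξ
  set xd : ℝ → ℝ := fun r => derivWithin ξ (Icc 0 R) r with hxd_def
  have hudiff : UniqueDiffOn ℝ (Icc (0:ℝ) R) := uniqueDiffOn_Icc hR
  have hxdcont : ContinuousOn xd (Icc 0 R) := hξ.continuousOn_derivWithin hudiff le_rfl
  have hξcont : ContinuousOn ξ (Icc 0 R) := hξ.continuousOn
  have hder : ∀ r ∈ Ioo (0:ℝ) R, HasDerivAt ξ (xd r) r := by
    intro r hr
    have hmem : Icc (0:ℝ) R ∈ nhds r := Icc_mem_nhds hr.1 hr.2
    have hd : DifferentiableAt ℝ ξ r := ((hξ.contDiffAt hmem).differentiableAt one_ne_zero)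
    have heq : xd r = deriv ξ r := hd.derivWithin (hudiff r ⟨hr.1.le, hr.2.le⟩)
    rw [heq]; exact hd.hasDerivAt
  -- FTC for W * ξ^2
  set D : ℝ → ℝ := fun r => Wd r * ξ r ^ 2 + W r * (2 * ξ r * xd r) with hD_def
  have hDcont : ContinuousOn D (Icc 0 R) := by
    apply ContinuousOn.add
    · exact (hWdcont.continuousOn).mul (hξcont.pow 2)
    · exact (hWcont.continuousOn).mul
        ((continuous_const.continuousOn.mul hξcont).mul hxdcont)
  have hDint : IntervalIntegrable D MeasureTheory.volume 0 R := by
    apply ContinuousOn.intervalIntegrable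
    rwa [uIcc_of_le hR.le]
  have hFTC : (∫ r in (0:ℝ)..R, D r) = 0 := by
    have hPcont : ContinuousOn (fun r => W r * ξ r ^ 2) (Icc 0 R) :=
      (hWcont.continuousOn).mul (hξcont.pow 2)
    have hPd : ∀ r ∈ Ioo (0:ℝ) R,
        HasDerivWithinAt (fun r => W r * ξ r ^ 2) (D r) (Ioi r) r := by
      intro r hr
      have h2 : HasDerivAt (fun y => ξ y ^ 2) (2 * ξ r * xd r) r := by
        have := (hder r hr).fun_pow 2
        simpa using this
      exact ((hWderiv r).mul h2).hasDerivWithinAt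
    have := intervalIntegral.integral_eq_sub_of_hasDeriv_right_of_le hR.le hPcont hPd hDint
    rw [this, hξR]
    have hW0 : W 0 = 0 := by simp [hW_def]
    simp [hW0]
  -- pointwise inequality
  have hpt : ∀ r ∈ Icc (0:ℝ) R,
      (m^2 * Real.sinh r ^ k + Hc * Real.sinh r ^ (k+2)) * ξ r ^ 2
        ≤ Real.sinh r ^ (k+2) * (xd r)^2 + D r := by
    intro r hr
    rcases eq_or_lt_of_le hr.1 with h0 | h0
    · -- r = 0
      have hr0 : r = 0 := h0.symm
      subst hr0
      rcases Nat.eq_zero_or_pos k with hk | hk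
      · subst hk
        simp only [hD_def, hW_def, hWd_def, hT_def, Real.sinh_zero, Real.cosh_zero]
        norm_num
        nlinarith [sq_nonneg (ξ 0)]
      · obtain ⟨j, rfl⟩ := Nat.exists_eq_succ_of_ne_zero (Nat.pos_iff_ne_zero.mp hk)
        simp [hD_def, hW_def, hWd_def, hT_def, Real.sinh_zero]
    · have hs : 0 < Real.sinh r := Real.sinh_pos_iff.mpr h0
      have hx1 : 1 ≤ Real.cosh r := Real.one_le_cosh r
      have hxA : Real.cosh r ≤ A + 1 := by
        rw [← hcoshA, Real.cosh_le_cosh, abs_of_pos h0, abs_of_pos hR]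
        exact hr.2
      have hsx : Real.sinh r ^ 2 = Real.cosh r ^ 2 - 1 := Real.sinh_sq r
      have hB : m^2 + Hc * (Real.sinh r ^2)
          ≤ 2*m*(Real.cosh r)*(T r) + (m + c)*(Real.sinh r^2) - (T r)^2 := by
        rw [hsx]
        have hkb := key_bracket m A (Real.cosh r) hA hx1 hxA
        simp only [hT_def, hc_def, hHc_def]
        convert hkb using 2 <;> ring
      have hk2m : ((k:ℝ)+1) = 2*m := by rw [hm_def]; ring
      have hiden : Real.sinh r^(k+2) * ((Real.sinh r^(k+2) * (xd r)^2 + D r)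
            - (m^2*Real.sinh r^k + Hc*Real.sinh r^(k+2)) * ξ r^2)
          = (Real.sinh r^(k+2)*(xd r) + W r * ξ r)^2
            + Real.sinh r^(2*k+2) * ((2*m*(Real.cosh r)*(T r) + (m+c)*(Real.sinh r)^2 - (T r)^2)
              - (m^2 + Hc*(Real.sinh r)^2)) * ξ r ^2 := by
        simp only [hD_def, hW_def, hWd_def, hk2m]
        ring
      have hrhs0 : 0 ≤ (Real.sinh r^(k+2)*(xd r) + W r * ξ r)^2
            + Real.sinh r^(2*k+2) * ((2*m*(Real.cosh r)*(T r) + (m+c)*(Real.sinh r)^2 - (T r)^2)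
              - (m^2 + Hc*(Real.sinh r)^2)) * ξ r ^2 := by
        apply add_nonneg (sq_nonneg _)
        apply mul_nonneg (mul_nonneg (pow_nonneg hs.le _) (by linarith)) (sq_nonneg _)
      have hmul : 0 ≤ Real.sinh r^(k+2) * ((Real.sinh r^(k+2) * (xd r)^2 + D r)
            - (m^2*Real.sinh r^k + Hc*Real.sinh r^(k+2)) * ξ r^2) := by
        rw [hiden]; exact hrhs0
      have hspos : 0 < Real.sinh r^(k+2) := pow_pos hs _
      have := (mul_nonneg_iff_of_pos_left hspos).mp hmul
      linarith
  -- integrability of the pieces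
  have hint1 : IntervalIntegrable (fun r => Real.sinh r ^ (k+2) * (xd r)^2)
      MeasureTheory.volume 0 R := by
    apply ContinuousOn.intervalIntegrable
    rw [uIcc_of_le hR.le]
    exact ((Real.continuous_sinh.pow _).continuousOn).mul (hxdcont.pow 2)
  have hint2 : IntervalIntegrable (fun r => Real.sinh r ^ k * (ξ r)^2)
      MeasureTheory.volume 0 R := by
    apply ContinuousOn.intervalIntegrable
    rw [uIcc_of_le hR.le]
    exact ((Real.continuous_sinh.pow _).continuousOn).mul (hξcont.pow 2)
  have hint3 : IntervalIntegrable (fun r => Real.sinh r ^ (k+2) * (ξ r)^2)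
      MeasureTheory.volume 0 R := by
    apply ContinuousOn.intervalIntegrable
    rw [uIcc_of_le hR.le]
    exact ((Real.continuous_sinh.pow _).continuousOn).mul (hξcont.pow 2)
  -- integral monotonicity
  have hmono : (∫ r in (0:ℝ)..R, (m^2 * Real.sinh r ^ k + Hc * Real.sinh r ^ (k+2)) * ξ r ^ 2)
      ≤ ∫ r in (0:ℝ)..R, (Real.sinh r ^ (k+2) * (xd r)^2 + D r) := by
    apply intervalIntegral.integral_mono_on hR.le _ _ hpt
    · apply ContinuousOn.intervalIntegrable
      rw [uIcc_of_le hR.le]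
      exact (((continuous_const.mul (Real.continuous_sinh.pow k)).add
        (continuous_const.mul (Real.continuous_sinh.pow (k+2)))).continuousOn).mul (hξcont.pow 2)
    · exact hint1.add hDint
  have hRHSsplit : (∫ r in (0:ℝ)..R, (Real.sinh r ^ (k+2) * (xd r)^2 + D r))
      = (∫ r in (0:ℝ)..R, Real.sinh r ^ (k+2) * (xd r)^2) := by
    rw [intervalIntegral.integral_add hint1 hDint, hFTC, add_zero]
  have hLHSsplit : (∫ r in (0:ℝ)..R, (m^2 * Real.sinh r ^ k + Hc * Real.sinh r ^ (k+2)) * ξ r ^ 2)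
      = m^2 * (∫ r in (0:ℝ)..R, Real.sinh r ^ k * ξ r ^ 2)
        + Hc * (∫ r in (0:ℝ)..R, Real.sinh r ^ (k+2) * ξ r ^ 2) := by
    rw [← intervalIntegral.integral_const_mul, ← intervalIntegral.integral_const_mul,
      ← intervalIntegral.integral_add (hint2.const_mul _) (hint3.const_mul _)]
    apply intervalIntegral.integral_congr
    intro x hx
    ring
  -- replace deriv by xd in the goal
  have hae : (∫ r in (0:ℝ)..R, Real.sinh r ^ (k+2) * (deriv ξ r)^2)
      = ∫ r in (0:ℝ)..R, Real.sinh r ^ (k+2) * (xd r)^2 := by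
    apply intervalIntegral.integral_congr_ae
    have hne : ∀ᵐ (x : ℝ), x ≠ R := by
      rw [MeasureTheory.ae_iff]
      have hset : {x : ℝ | ¬ x ≠ R} = {R} := by ext y; simp
      rw [hset]
      exact MeasureTheory.measure_singleton R
    filter_upwards [hne] with x hx hmem
    rw [uIoc_of_le hR.le] at hmem
    have hxoo : x ∈ Ioo (0:ℝ) R := ⟨hmem.1, lt_of_le_of_ne hmem.2 hx⟩
    rw [(hder x hxoo).deriv]
  rw [ge_iff_le, hgc1, hgc2, hae]
  calc m ^ 2 * (∫ r in (0:ℝ)..R, Real.sinh r ^ k * ξ r ^ 2)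
        + Hc * (∫ r in (0:ℝ)..R, Real.sinh r ^ (k+2) * ξ r ^ 2)
      = ∫ r in (0:ℝ)..R, (m^2 * Real.sinh r ^ k + Hc * Real.sinh r ^ (k+2)) * ξ r ^ 2 :=
        hLHSsplit.symm
    _ ≤ ∫ r in (0:ℝ)..R, (Real.sinh r ^ (k+2) * (xd r)^2 + D r) := hmono
    _ = ∫ r in (0:ℝ)..R, Real.sinh r ^ (k+2) * (xd r)^2 := hRHSsplit
end

section
/- Let n ≥ 3, 0 < R < π/2, and ψ = sin on (0,R). For every C¹ function ξ : [0,R] → ℝ with ξ(R)=0 and ξ·ψ^{(n-2)/2} extending continuously by 0 at r=0, one has ∫₀^R sin(r)^{n-1} ξ'(r)² dr ≥ ((n-2)²/4) ∫₀^R sin(r)^{n-3} ξ(r)² dr + H ∫₀^R sin(r)^{n-1} ξ(r)² dr, where H = (1/4)( sin²R/(1 - cos R)² - n(n-2) ). -/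
open Set Filter Real
open MeasureTheory Topology

/-- Improved weighted Hardy inequality on the sphere: for `n ≥ 3`, `0 < R < π/2`, and
any `C¹` function `ξ` on `[0,R]` with `ξ(R) = 0` such that `ξ · sin^{(n-2)/2}` extends
continuously by `0` at `r = 0`,
`∫₀^R sin^{n-1} ξ'² ≥ ((n-2)²/4) ∫₀^R sin^{n-3} ξ² + H ∫₀^R sin^{n-1} ξ²`,
where `H = (1/4)(sin²R/(1 - cos R)² - n(n-2))`. -/
theorem stmt_4 (n : ℕ) (hn : 3 ≤ n) (R : ℝ) (hR : 0 < R) (hR2 : R < Real.pi / 2)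
    (ξ : ℝ → ℝ) (hξ : ContDiffOn ℝ 1 ξ (Icc 0 R)) (hξR : ξ R = 0)
    (hext : Tendsto (fun r => ξ r * Real.sin r ^ (((n : ℝ) - 2) / 2))
      (nhdsWithin 0 (Ioi 0)) (nhds 0)) :
    (∫ r in (0:ℝ)..R, Real.sin r ^ (n - 1) * (deriv ξ r) ^ 2)
      ≥ (((n : ℝ) - 2) ^ 2 / 4) * (∫ r in (0:ℝ)..R, Real.sin r ^ (n - 3) * (ξ r) ^ 2)
        + (1 / 4) * (Real.sin R ^ 2 / (1 - Real.cos R) ^ 2 - (n : ℝ) * ((n : ℝ) - 2))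
          * (∫ r in (0:ℝ)..R, Real.sin r ^ (n - 1) * (ξ r) ^ 2) := by
  clear hext
  obtain ⟨m, rfl⟩ : ∃ m, n = m + 3 := ⟨n - 3, by omega⟩
  clear hn
  have hπ : R < Real.pi := hR2.trans (by linarith [Real.pi_pos])
  have hcosR_pos : 0 < Real.cos R := Real.cos_pos_of_mem_Ioo ⟨by linarith [Real.pi_pos], hR2⟩
  have hcosR_lt1 : Real.cos R < 1 := by
    have := Real.cos_lt_cos_of_nonneg_of_le_pi le_rfl hπ.le hR
    simpa using this
  have h1cR : 0 < 1 - Real.cos R := by linarith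
  have hsinR : 0 < Real.sin R := Real.sin_pos_of_pos_of_lt_pi hR hπ
  set A : ℝ := ((m : ℝ) + 1) / 2 with hA
  set β : ℝ := Real.sin R ^ 2 / (2 * (1 - Real.cos R) ^ 2) with hβdef
  have hβpos : 0 < β := by positivity
  set H : ℝ := (1 / 4 : ℝ) * (Real.sin R ^ 2 / (1 - Real.cos R) ^ 2
      - ((m + 3 : ℕ) : ℝ) * (((m + 3 : ℕ) : ℝ) - 2)) with hHdef
  have hH : H = β / 2 - A ^ 2 - A := by
    rw [hHdef, hβdef, hA]
    push_cast
    field_simp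
    ring
  -- the key algebraic bracket inequality
  have hbr : ∀ s c x d : ℝ, s ^ 2 = 1 - c ^ 2 → Real.cos R ≤ c →
      A ^ 2 * x ^ 2 + H * (s ^ 2 * x ^ 2) ≤ s ^ 2 * d ^ 2
        + ((((m : ℝ) + 1) * c * (A * c + β * (1 - c)) + s * ((β - A) * s)) * x ^ 2
            + (s * (A * c + β * (1 - c))) * (2 * x * d)) := by
    intro s c x d hs hc
    have hc1 : c ≤ 1 := by nlinarith [sq_nonneg s, hcosR_pos]
    have hβc : β * (1 - c) ≤ (1 + c) / 2 := by
      have hsq : Real.sin R ^ 2 = (1 - Real.cos R) * (1 + Real.cos R) := by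
        have := Real.sin_sq R; nlinarith [this]
      rw [hβdef, hsq, div_mul_eq_mul_div, div_le_div_iff₀ (by positivity) two_pos]
      nlinarith [hc, h1cR]
    have h2A : (m : ℝ) + 1 = 2 * A := by rw [hA]; ring
    have hkey : s ^ 2 * d ^ 2
        + ((((m : ℝ) + 1) * c * (A * c + β * (1 - c)) + s * ((β - A) * s)) * x ^ 2
            + (s * (A * c + β * (1 - c))) * (2 * x * d))
        - (A ^ 2 * x ^ 2 + H * (s ^ 2 * x ^ 2))
        = (s * d + (A * c + β * (1 - c)) * x) ^ 2
          + (β * (1 - c) * ((1 + c) / 2 - β * (1 - c))) * x ^ 2 := by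
      rw [hH, h2A]
      linear_combination ((β / 2 + A ^ 2) * x ^ 2) * hs
    have hpos2 : 0 ≤ (β * (1 - c) * ((1 + c) / 2 - β * (1 - c))) * x ^ 2 := by
      have : 0 ≤ β * (1 - c) := mul_nonneg hβpos.le (by linarith)
      have h3 : 0 ≤ (1 + c) / 2 - β * (1 - c) := by linarith
      positivity
    linarith [sq_nonneg (s * d + (A * c + β * (1 - c)) * x), hpos2, hkey]
  -- analytic setup
  have hUD : UniqueDiffOn ℝ (Icc (0:ℝ) R) := uniqueDiffOn_Icc hR
  set ξd : ℝ → ℝ := derivWithin ξ (Icc 0 R) with hξddef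
  have hξc : ContinuousOn ξ (Icc 0 R) := hξ.continuousOn
  have hξdc : ContinuousOn ξd (Icc 0 R) := hξ.continuousOn_derivWithin hUD le_rfl
  have hdeq : ∀ r ∈ Ioo (0:ℝ) R, deriv ξ r = ξd r := by
    intro r hr
    exact (derivWithin_of_mem_nhds (Icc_mem_nhds hr.1 hr.2)).symm
  set P : ℝ → ℝ := fun r => Real.sin r ^ (m + 1)
      * (A * Real.cos r + β * (1 - Real.cos r)) with hP
  set P' : ℝ → ℝ := fun r => ((m : ℝ) + 1) * Real.sin r ^ m * Real.cos r
      * (A * Real.cos r + β * (1 - Real.cos r))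
      + Real.sin r ^ (m + 1) * ((β - A) * Real.sin r) with hP'
  have hPd : ∀ r, HasDerivAt P (P' r) r := by
    intro r
    have h1 : HasDerivAt (fun r => Real.sin r ^ (m + 1))
        (((m : ℝ) + 1) * Real.sin r ^ m * Real.cos r) r := by
      have := (Real.hasDerivAt_sin r).fun_pow (m + 1)
      simpa [Nat.add_sub_cancel] using this
    have h2 : HasDerivAt (fun r => A * Real.cos r + β * (1 - Real.cos r))
        ((β - A) * Real.sin r) r := by
      have ha : HasDerivAt (fun r => A * Real.cos r) (A * (-Real.sin r)) r :=
        (Real.hasDerivAt_cos r).const_mul A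
      have hb : HasDerivAt (fun r => β * (1 - Real.cos r)) (β * Real.sin r) r := by
        have := ((hasDerivAt_const r (1:ℝ)).sub (Real.hasDerivAt_cos r)).const_mul β
        simpa using this
      have := ha.fun_add hb
      exact this.congr_deriv (by ring)
    simpa [hP, hP'] using h1.fun_mul h2
  have hPcont : Continuous P := by
    rw [hP]; fun_prop
  have hP'cont : Continuous P' := by
    rw [hP']; fun_prop
  set g : ℝ → ℝ := fun r => P' r * ξ r ^ 2 + P r * (2 * ξ r * ξd r) with hg
  have hgcont : ContinuousOn g (Icc 0 R) :=
    (hP'cont.continuousOn.mul (hξc.pow 2)).add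
      (hPcont.continuousOn.mul ((continuousOn_const.mul hξc).mul hξdc))
  have huIcc : uIcc (0:ℝ) R = Icc 0 R := uIcc_of_le hR.le
  have hgint : IntervalIntegrable g volume 0 R :=
    (huIcc ▸ hgcont).intervalIntegrable
  -- FTC : ∫ g = 0
  have hFTC : (∫ r in (0:ℝ)..R, g r) = 0 := by
    have h0 : ∀ x ∈ Ioo (0:ℝ) R,
        HasDerivWithinAt (fun r => P r * ξ r ^ 2) (g x) (Ioi x) x := by
      intro x hx
      have hmem : Icc (0:ℝ) R ∈ 𝓝 x := Icc_mem_nhds hx.1 hx.2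
      have hdx : DifferentiableAt ℝ ξ x :=
        ((hξ.differentiableOn one_ne_zero) x (Ioo_subset_Icc_self hx)).differentiableAt hmem
      have h2 : HasDerivAt (fun r => ξ r ^ 2) (2 * ξ x * deriv ξ x) x := by
        have := hdx.hasDerivAt.fun_pow 2
        simpa [Nat.add_sub_cancel] using this
      have h3 := (hPd x).mul h2
      have h4 : g x = P' x * ξ x ^ 2 + P x * (2 * ξ x * deriv ξ x) := by
        rw [hg]; simp only; rw [hdeq x hx]
      rw [h4]
      exact h3.hasDerivWithinAt
    have hcont : ContinuousOn (fun r => P r * ξ r ^ 2) (Icc 0 R) :=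
      hPcont.continuousOn.mul (hξc.pow 2)
    rw [intervalIntegral.integral_eq_sub_of_hasDeriv_right_of_le hR.le hcont h0 hgint]
    have hP0 : P 0 = 0 := by simp [hP]
    simp [hξR, hP0]
  -- pointwise inequality on Ioo
  have hkey : ∀ r ∈ Ioo (0:ℝ) R,
      A ^ 2 * (Real.sin r ^ m * ξ r ^ 2) + H * (Real.sin r ^ (m + 2) * ξ r ^ 2)
        ≤ Real.sin r ^ (m + 2) * (ξd r) ^ 2 + g r := by
    intro r hr
    have hs : 0 < Real.sin r := Real.sin_pos_of_pos_of_lt_pi hr.1 (hr.2.trans hπ)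
    have hc : Real.cos R ≤ Real.cos r :=
      Real.cos_le_cos_of_nonneg_of_le_pi hr.1.le hπ.le hr.2.le
    have hs2 : Real.sin r ^ 2 = 1 - Real.cos r ^ 2 := Real.sin_sq r
    have hb := hbr (Real.sin r) (Real.cos r) (ξ r) (ξd r) hs2 hc
    have ht : (0:ℝ) ≤ Real.sin r ^ m := pow_nonneg hs.le m
    have hmul := mul_le_mul_of_nonneg_left hb ht
    calc A ^ 2 * (Real.sin r ^ m * ξ r ^ 2) + H * (Real.sin r ^ (m + 2) * ξ r ^ 2)
        = Real.sin r ^ m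
          * (A ^ 2 * ξ r ^ 2 + H * (Real.sin r ^ 2 * ξ r ^ 2)) := by ring
      _ ≤ Real.sin r ^ m * (Real.sin r ^ 2 * ξd r ^ 2
          + ((((m : ℝ) + 1) * Real.cos r
                * (A * Real.cos r + β * (1 - Real.cos r))
              + Real.sin r * ((β - A) * Real.sin r)) * ξ r ^ 2
            + (Real.sin r * (A * Real.cos r + β * (1 - Real.cos r)))
              * (2 * ξ r * ξd r))) := hmul
      _ = Real.sin r ^ (m + 2) * (ξd r) ^ 2 + g r := by
          rw [hg, hP, hP']; ring
  -- integrability of the pieces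
  have hf1int : IntervalIntegrable (fun r => Real.sin r ^ (m + 2) * (ξd r) ^ 2) volume 0 R := by
    apply ContinuousOn.intervalIntegrable
    rw [huIcc]
    exact (Continuous.continuousOn (by fun_prop)).mul (hξdc.pow 2)
  have hf2int : IntervalIntegrable (fun r => Real.sin r ^ m * ξ r ^ 2) volume 0 R := by
    apply ContinuousOn.intervalIntegrable
    rw [huIcc]
    exact (Continuous.continuousOn (by fun_prop)).mul (hξc.pow 2)
  have hf3int : IntervalIntegrable (fun r => Real.sin r ^ (m + 2) * ξ r ^ 2) volume 0 R := by
    apply ContinuousOn.intervalIntegrable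
    rw [huIcc]
    exact (Continuous.continuousOn (by fun_prop)).mul (hξc.pow 2)
  -- monotone comparison
  have hmono : (∫ r in (0:ℝ)..R,
        (A ^ 2 * (Real.sin r ^ m * ξ r ^ 2) + H * (Real.sin r ^ (m + 2) * ξ r ^ 2)))
      ≤ ∫ r in (0:ℝ)..R, (Real.sin r ^ (m + 2) * (ξd r) ^ 2 + g r) := by
    apply intervalIntegral.integral_mono_ae_restrict hR.le
      ((hf2int.const_mul _).add (hf3int.const_mul _)) (hf1int.add hgint)
    have hres : volume.restrict (Icc (0:ℝ) R) = volume.restrict (Ioo 0 R) :=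
      (Measure.restrict_congr_set Ioo_ae_eq_Icc).symm
    rw [hres]
    filter_upwards [ae_restrict_mem measurableSet_Ioo] with r hr
    exact hkey r hr
  -- put the integrals together
  have hsplit1 : (∫ r in (0:ℝ)..R, (Real.sin r ^ (m + 2) * (ξd r) ^ 2 + g r))
      = (∫ r in (0:ℝ)..R, Real.sin r ^ (m + 2) * (ξd r) ^ 2) := by
    rw [intervalIntegral.integral_add hf1int hgint, hFTC, add_zero]
  have hsplit2 : (∫ r in (0:ℝ)..R,
        (A ^ 2 * (Real.sin r ^ m * ξ r ^ 2) + H * (Real.sin r ^ (m + 2) * ξ r ^ 2)))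
      = A ^ 2 * (∫ r in (0:ℝ)..R, Real.sin r ^ m * ξ r ^ 2)
        + H * (∫ r in (0:ℝ)..R, Real.sin r ^ (m + 2) * ξ r ^ 2) := by
    rw [intervalIntegral.integral_add (hf2int.const_mul _) (hf3int.const_mul _),
      intervalIntegral.integral_const_mul, intervalIntegral.integral_const_mul]
  -- identify the LHS with the continuous version
  have hcongr : (∫ r in (0:ℝ)..R, Real.sin r ^ (m + 2) * (deriv ξ r) ^ 2)
      = ∫ r in (0:ℝ)..R, Real.sin r ^ (m + 2) * (ξd r) ^ 2 := by
    apply intervalIntegral.integral_congr_ae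
    have haeR : ∀ᵐ (x : ℝ), x ≠ R := by
      rw [ae_iff]
      simpa using measure_singleton R
    filter_upwards [haeR] with x hx hmem
    rw [uIoc_of_le hR.le] at hmem
    have hxo : x ∈ Ioo (0:ℝ) R := ⟨hmem.1, lt_of_le_of_ne hmem.2 hx⟩
    rw [hdeq x hxo]
  -- finish
  have hexp1 : (m + 3) - 1 = m + 2 := rfl
  have hexp3 : (m + 3) - 3 = m := rfl
  rw [ge_iff_le, hexp1, hexp3]
  have hcoef : (((m + 3 : ℕ) : ℝ) - 2) ^ 2 / 4 = A ^ 2 := by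
    rw [hA]; push_cast; ring
  rw [hcoef, hcongr]
  calc A ^ 2 * (∫ r in (0:ℝ)..R, Real.sin r ^ m * ξ r ^ 2)
        + H * (∫ r in (0:ℝ)..R, Real.sin r ^ (m + 2) * ξ r ^ 2)
      = ∫ r in (0:ℝ)..R,
          (A ^ 2 * (Real.sin r ^ m * ξ r ^ 2) + H * (Real.sin r ^ (m + 2) * ξ r ^ 2)) :=
        hsplit2.symm
    _ ≤ ∫ r in (0:ℝ)..R, (Real.sin r ^ (m + 2) * (ξd r) ^ 2 + g r) := hmono
    _ = ∫ r in (0:ℝ)..R, Real.sin r ^ (m + 2) * (ξd r) ^ 2 := hsplit1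
end

section
/- Let n ≥ 3 and R > 0. The function u(r) = -2 log( sinh(r)/sinh(R) ) satisfies the radial equation -(sinh(r)^{n-1} u'(r))' = sinh(r)^{n-1} · 2(n-2) · ( e^{u(r)}/sinh(R)² + (n-1)/(n-2) ) for all r ∈ (0,R), and u(R) = 0. -/
open Set

/-- The explicit singular solution for the exponential nonlinearity in hyperbolic space:
`u(r) = -2 log(sinh r / sinh R)` satisfies
`-(sinh^{n-1} u')' = sinh^{n-1} · 2(n-2) · (e^u/sinh²R + (n-1)/(n-2))` on `(0,R)`,
together with `u(R) = 0`. -/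
theorem stmt_7 (n : ℕ) (hn : 3 ≤ n) (R : ℝ) (hR : 0 < R) :
    (∀ r ∈ Ioo 0 R,
      HasDerivAt
        (fun s => Real.sinh s ^ (n - 1) *
          deriv (fun t => -2 * Real.log (Real.sinh t / Real.sinh R)) s)
        (-(Real.sinh r ^ (n - 1) * (2 * ((n : ℝ) - 2)) *
          (Real.exp (-2 * Real.log (Real.sinh r / Real.sinh R)) / Real.sinh R ^ 2
            + ((n : ℝ) - 1) / ((n : ℝ) - 2)))) r) ∧
    -2 * Real.log (Real.sinh R / Real.sinh R) = 0 := by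
  obtain ⟨m, rfl⟩ : ∃ m, n = m + 3 := ⟨n - 3, by omega⟩
  have hsR : 0 < Real.sinh R := Real.sinh_pos_iff.mpr hR
  constructor
  · intro r hr
    have hsr : 0 < Real.sinh r := Real.sinh_pos_iff.mpr hr.1
    -- derivative of u at points s > 0
    have hderiv : ∀ s ∈ Ioo (0:ℝ) R,
        deriv (fun t => -2 * Real.log (Real.sinh t / Real.sinh R)) s
          = -2 * (Real.cosh s / Real.sinh s) := by
      intro s hs
      have hss : 0 < Real.sinh s := Real.sinh_pos_iff.mpr hs.1
      have h1 : HasDerivAt (fun t => Real.sinh t / Real.sinh R)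
          (Real.cosh s / Real.sinh R) s := (Real.hasDerivAt_sinh s).div_const _
      have h2 := (h1.log (by positivity)).const_mul (-2 : ℝ)
      rw [h2.deriv]
      field_simp
    -- F agrees with G near r
    have hmem : Ioo (0:ℝ) R ∈ nhds r := Ioo_mem_nhds hr.1 hr.2
    have heq : (fun s => Real.sinh s ^ (m + 3 - 1) *
          deriv (fun t => -2 * Real.log (Real.sinh t / Real.sinh R)) s)
        =ᶠ[nhds r] fun s => -2 * (Real.sinh s ^ (m + 1) * Real.cosh s) := by
      filter_upwards [hmem] with s hs
      have hss : Real.sinh s ≠ 0 := (Real.sinh_pos_iff.mpr hs.1).ne'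
      rw [hderiv s hs]
      show Real.sinh s ^ (m + 2) * _ = _
      field_simp
      ring
    -- G has a derivative
    have hG : HasDerivAt (fun s => -2 * (Real.sinh s ^ (m + 1) * Real.cosh s))
        (-2 * (((m + 1 : ℕ) * Real.sinh r ^ m * Real.cosh r) * Real.cosh r
          + Real.sinh r ^ (m + 1) * Real.sinh r)) r := by
      exact (((Real.hasDerivAt_sinh r).pow (m+1)).mul (Real.hasDerivAt_cosh r)).const_mul (-2)
    have := hG.congr_of_eventuallyEq heq
    refine this.congr_deriv (Eq.symm ?_)
    have hexp : Real.exp (-2 * Real.log (Real.sinh r / Real.sinh R))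
        = ((Real.sinh r / Real.sinh R) ^ 2)⁻¹ := by
      rw [show (-2:ℝ) * Real.log (Real.sinh r / Real.sinh R)
          = Real.log (((Real.sinh r / Real.sinh R) ^ 2)⁻¹) by
        rw [Real.log_inv, Real.log_pow]; push_cast; ring]
      exact Real.exp_log (by positivity)
    rw [hexp]
    have hcosh : Real.cosh r ^ 2 = Real.sinh r ^ 2 + 1 := Real.cosh_sq r
    have h1 : Real.cosh r * Real.cosh r = Real.sinh r ^ 2 + 1 := by
      rw [← hcosh]; ring
    show -(Real.sinh r ^ (m + 2) * _ * _) = _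
    push_cast
    have h2 : ((m:ℝ) + 3 - 2) ≠ 0 := by have : (0:ℝ) ≤ m := Nat.cast_nonneg m; linarith
    field_simp
    ring_nf
    rw [show Real.cosh r ^ 2 = Real.sinh r ^ 2 + 1 from hcosh]
    ring
  · rw [div_self hsR.ne', Real.log_one, mul_zero]
end

section
/- Let n ≥ 3 and 0 < R < π/2. The function u(r) = -2 log( sin(r)/sin(R) ) satisfies the radial equation -(sin(r)^{n-1} u'(r))' = sin(r)^{n-1} · 2(n-2) · ( e^{u(r)}/sin(R)² - (n-1)/(n-2) ) for all r ∈ (0,R), and u(R) = 0. -/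
open Set

/-- The explicit singular solution for the exponential nonlinearity on the sphere:
for `0 < R < π/2`, `u(r) = -2 log(sin r / sin R)` satisfies
`-(sin^{n-1} u')' = sin^{n-1} · 2(n-2) · (e^u/sin²R - (n-1)/(n-2))` on `(0,R)`,
together with `u(R) = 0`. -/
theorem stmt_8 (n : ℕ) (hn : 3 ≤ n) (R : ℝ) (hR : 0 < R) (hR2 : R < Real.pi / 2) :
    (∀ r ∈ Ioo 0 R,
      HasDerivAt
        (fun s => Real.sin s ^ (n - 1) *
          deriv (fun t => -2 * Real.log (Real.sin t / Real.sin R)) s)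
        (-(Real.sin r ^ (n - 1) * (2 * ((n : ℝ) - 2)) *
          (Real.exp (-2 * Real.log (Real.sin r / Real.sin R)) / Real.sin R ^ 2
            - ((n : ℝ) - 1) / ((n : ℝ) - 2)))) r) ∧
    -2 * Real.log (Real.sin R / Real.sin R) = 0 := by
  have hpi : R < Real.pi := lt_trans hR2 (by linarith [Real.pi_pos])
  have hRpos : 0 < Real.sin R := Real.sin_pos_of_pos_of_lt_pi hR hpi
  constructor
  · intro r hr
    obtain ⟨k, rfl⟩ : ∃ k, n = k + 3 := ⟨n - 3, by omega⟩
    have hrpos : 0 < Real.sin r := Real.sin_pos_of_pos_of_lt_pi hr.1 (lt_trans hr.2 hpi)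
    have hF : ∀ s ∈ Ioo (0:ℝ) R,
        HasDerivAt (fun t => -2 * Real.log (Real.sin t / Real.sin R))
          (-2 * (Real.cos s / Real.sin s)) s := by
      intro s hs
      have hspos : 0 < Real.sin s := Real.sin_pos_of_pos_of_lt_pi hs.1 (lt_trans hs.2 hpi)
      have h1 : HasDerivAt (fun t => Real.sin t / Real.sin R)
          (Real.cos s / Real.sin R) s := (Real.hasDerivAt_sin s).div_const _
      have h2 := h1.log (by positivity)
      have h3 := h2.const_mul (-2 : ℝ)
      convert h3 using 1
      · rfl
      · rfl
      · field_simp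
    have hmem : Ioo (0:ℝ) R ∈ nhds r := Ioo_mem_nhds hr.1 hr.2
    have hev : (fun s => Real.sin s ^ (k + 3 - 1) *
          deriv (fun t => -2 * Real.log (Real.sin t / Real.sin R)) s)
        =ᶠ[nhds r] (fun s => -2 * Real.sin s ^ (k + 1) * Real.cos s) := by
      filter_upwards [hmem] with s hs
      have hspos : 0 < Real.sin s := Real.sin_pos_of_pos_of_lt_pi hs.1 (lt_trans hs.2 hpi)
      rw [(hF s hs).deriv]
      show Real.sin s ^ (k + 2) * _ = _
      field_simp
      ring
    have hh : HasDerivAt (fun s => -2 * Real.sin s ^ (k + 1) * Real.cos s)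
        (-2 * ((((k:ℝ) + 1) * Real.sin r ^ k * Real.cos r) * Real.cos r
          + Real.sin r ^ (k + 1) * (-Real.sin r))) r := by
      have h1 := ((Real.hasDerivAt_sin r).pow (k + 1)).mul (Real.hasDerivAt_cos r)
      have h2 := h1.const_mul (-2 : ℝ)
      convert h2 using 2 with s
      · rfl
      · rfl
      · simp only [Pi.mul_apply, Pi.pow_apply]; ring
      · simp only [Pi.pow_apply, Nat.add_sub_cancel]; push_cast; ring
    have hval : (-2 * ((((k:ℝ) + 1) * Real.sin r ^ k * Real.cos r) * Real.cos r
          + Real.sin r ^ (k + 1) * (-Real.sin r)))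
        = (-(Real.sin r ^ (k + 3 - 1) * (2 * (((k + 3 : ℕ) : ℝ) - 2)) *
          (Real.exp (-2 * Real.log (Real.sin r / Real.sin R)) / Real.sin R ^ 2
            - (((k + 3 : ℕ) : ℝ) - 1) / (((k + 3 : ℕ) : ℝ) - 2)))) := by
      have hexp : Real.exp (-2 * Real.log (Real.sin r / Real.sin R))
          = Real.sin R ^ 2 / Real.sin r ^ 2 := by
        rw [Real.log_div hrpos.ne' hRpos.ne']
        rw [show (-2 : ℝ) * (Real.log (Real.sin r) - Real.log (Real.sin R))
          = Real.log ((Real.sin R ^ 2) / (Real.sin r ^ 2)) by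
            rw [Real.log_div (by positivity) (by positivity), Real.log_pow, Real.log_pow]
            push_cast; ring]
        exact Real.exp_log (by positivity)
      rw [hexp]
      have hsc : Real.cos r ^ 2 = 1 - Real.sin r ^ 2 := by
        have := Real.sin_sq_add_cos_sq r; linarith
      show _ = -(Real.sin r ^ (k + 2) * _ * _)
      push_cast
      have hk : ((k:ℝ) + 3) - 2 = (k:ℝ) + 1 := by ring
      rw [hk]
      have hkpos : (0:ℝ) < (k:ℝ) + 1 := by positivity
      field_simp
      linear_combination (-((k:ℝ)+1) * Real.sin r ^ k * Real.sin r ^ 2) * hsc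
    exact hval ▸ (hh.congr_of_eventuallyEq hev)
  · simp [div_self hRpos.ne']
end

section
/- Let n ≥ 3, R > 0, m > 1 with (m-1)n > 2m, and let λ = (2/(m-1))(n - 2m/(m-1)). Then the function u(r) = sinh(r)^{-2/(m-1)} - sinh(R)^{-2/(m-1)} satisfies -(sinh(r)^{n-1} u'(r))' = sinh(r)^{n-1} λ (u(r) + sinh(R)^{-2/(m-1)}) ( (u(r) + sinh(R)^{-2/(m-1)})^{m-1} + ((m-1)n-(m+1))/((m-1)n-2m) ) for all r ∈ (0,R), and u(R)=0. -/
open Set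

/-- The explicit singular solution for the power nonlinearity in hyperbolic space:
for `m > 1` with `(m-1)n > 2m` and `λ = (2/(m-1))(n - 2m/(m-1))`, the function
`u(r) = sinh(r)^{-2/(m-1)} - sinh(R)^{-2/(m-1)}` satisfies
`-(sinh^{n-1} u')' = sinh^{n-1} λ (u + sinh(R)^{-2/(m-1)})
  ((u + sinh(R)^{-2/(m-1)})^{m-1} + ((m-1)n-(m+1))/((m-1)n-2m))` on `(0,R)`, and `u(R)=0`. -/
theorem stmt_9 (n : ℕ) (hn : 3 ≤ n) (R : ℝ) (hR : 0 < R) (m : ℝ) (hm : 1 < m)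
    (hmn : (m - 1) * n > 2 * m)
    (u : ℝ → ℝ)
    (hu : ∀ r, u r = Real.sinh r ^ (-(2 / (m - 1))) - Real.sinh R ^ (-(2 / (m - 1)))) :
    (∀ r ∈ Ioo 0 R,
      HasDerivAt (fun s => Real.sinh s ^ (n - 1) * deriv u s)
        (-(Real.sinh r ^ (n - 1) * ((2 / (m - 1)) * ((n : ℝ) - 2 * m / (m - 1))) *
          ((u r + Real.sinh R ^ (-(2 / (m - 1)))) *
            ((u r + Real.sinh R ^ (-(2 / (m - 1)))) ^ (m - 1)
              + ((m - 1) * n - (m + 1)) / ((m - 1) * n - 2 * m))))) r) ∧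
    u R = 0 := by
  have hm0 : (0:ℝ) < m - 1 := by linarith
  have hm0' : m - 1 ≠ 0 := ne_of_gt hm0
  have hden : ((m - 1) * (n:ℝ) - 2 * m) ≠ 0 := ne_of_gt (by linarith)
  set a : ℝ := -(2 / (m - 1)) with ha
  set L : ℝ := (2 / (m - 1)) * ((n : ℝ) - 2 * m / (m - 1)) with hL
  set c : ℝ := ((m - 1) * (n:ℝ) - (m + 1)) / ((m - 1) * (n:ℝ) - 2 * m) with hc
  have hcast1 : ((n - 1 : ℕ) : ℝ) = (n : ℝ) - 1 := by
    rw [Nat.cast_sub (by omega)]; norm_num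
  have hcast2 : ((n - 1 - 1 : ℕ) : ℝ) = (n : ℝ) - 2 := by
    rw [show n - 1 - 1 = n - 2 from by omega, Nat.cast_sub (by omega)]; norm_num
  have hexp : a * (m - 1) = -2 := by rw [ha]; field_simp
  have f1 : a * ((n:ℝ) - 2 + a) = -L := by rw [ha, hL]; field_simp; ring
  have f2 : L * c = -(a * ((n:ℝ) - 1 + a)) := by rw [ha, hL, hc]; field_simp; ring
  constructor
  · intro r hr
    have hrpos : 0 < r := hr.1
    have hS : 0 < Real.sinh r := Real.sinh_pos_iff.mpr hrpos
    have hufun : u = fun s => Real.sinh s ^ a - Real.sinh R ^ a := funext hu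
    have hderiv : ∀ s ∈ Ioi (0:ℝ), deriv u s = Real.cosh s * a * Real.sinh s ^ (a - 1) := by
      intro s hs
      have h2 := (Real.hasDerivAt_sinh s).rpow_const
        (p := a) (Or.inl (ne_of_gt (Real.sinh_pos_iff.mpr hs)))
      have h3 := h2.sub_const (Real.sinh R ^ a)
      rw [hufun]
      exact h3.deriv
    have h1 : HasDerivAt (fun s => Real.sinh s ^ (n - 1))
        (((n - 1 : ℕ) : ℝ) * Real.sinh r ^ (n - 1 - 1) * Real.cosh r) r :=
      (Real.hasDerivAt_sinh r).pow (n - 1)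
    have h2a : HasDerivAt (fun s => Real.cosh s * a) (Real.sinh r * a) r :=
      (Real.hasDerivAt_cosh r).mul_const a
    have h2b : HasDerivAt (fun s => Real.sinh s ^ (a - 1))
        (Real.cosh r * (a - 1) * Real.sinh r ^ (a - 1 - 1)) r :=
      (Real.hasDerivAt_sinh r).rpow_const (Or.inl (ne_of_gt hS))
    have hG := h1.mul (h2a.mul h2b)
    have hev : (fun s => Real.sinh s ^ (n - 1) * deriv u s) =ᶠ[nhds r]
        fun s => Real.sinh s ^ (n - 1) * (Real.cosh s * a * Real.sinh s ^ (a - 1)) := by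
      filter_upwards [isOpen_Ioi.mem_nhds hrpos] with s hs
      rw [hderiv s hs]
    have hF := hG.congr_of_eventuallyEq hev
    refine hF.congr_deriv (Eq.symm ?_)
    simp only [Pi.mul_apply]
    rw [hu r, sub_add_cancel]
    set S := Real.sinh r with hSdef
    set C := Real.cosh r with hCdef
    have hC : C ^ 2 = S ^ 2 + 1 := Real.cosh_sq r
    have hmr : (S ^ a) ^ (m - 1) = S ^ (-2 : ℝ) := by
      rw [← Real.rpow_mul hS.le, hexp]
    rw [hmr, hcast1]
    have r1 : S ^ (n - 1 - 1) * S ^ (a - 1) = S ^ ((n:ℝ) - 3 + a) := by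
      rw [← Real.rpow_natCast S (n - 1 - 1), hcast2, ← Real.rpow_add hS,
        show (n:ℝ) - 2 + (a - 1) = (n:ℝ) - 3 + a from by ring]
    have r2 : S ^ (n - 1) * S ^ (a - 1 - 1) = S ^ ((n:ℝ) - 3 + a) := by
      rw [← Real.rpow_natCast S (n - 1), hcast1, ← Real.rpow_add hS,
        show (n:ℝ) - 1 + (a - 1 - 1) = (n:ℝ) - 3 + a from by ring]
    have r3 : S ^ (n - 1) * S ^ (a - 1) = S ^ ((n:ℝ) - 3 + a) * S := by
      rw [← Real.rpow_natCast S (n - 1), hcast1, ← Real.rpow_add hS,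
        show S ^ ((n:ℝ) - 3 + a) * S = S ^ ((n:ℝ) - 3 + a) * S ^ (1:ℝ) from by
          rw [Real.rpow_one],
        ← Real.rpow_add hS,
        show (n:ℝ) - 1 + (a - 1) = (n:ℝ) - 3 + a + 1 from by ring]
    have r4 : S ^ (n - 1) * S ^ a * S ^ (-2:ℝ) = S ^ ((n:ℝ) - 3 + a) := by
      rw [← Real.rpow_natCast S (n - 1), hcast1, ← Real.rpow_add hS, ← Real.rpow_add hS,
        show (n:ℝ) - 1 + a + -2 = (n:ℝ) - 3 + a from by ring]
    have r5 : S ^ (n - 1) * S ^ a = S ^ ((n:ℝ) - 3 + a) * S * S := by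
      rw [← Real.rpow_natCast S (n - 1), hcast1, ← Real.rpow_add hS,
        show S ^ ((n:ℝ) - 3 + a) * S * S
            = S ^ ((n:ℝ) - 3 + a) * S ^ (1:ℝ) * S ^ (1:ℝ) from by rw [Real.rpow_one],
        ← Real.rpow_add hS, ← Real.rpow_add hS,
        show (n:ℝ) - 1 + a = (n:ℝ) - 3 + a + 1 + 1 from by ring]
    linear_combination (-(((n:ℝ) - 1) * a * C ^ 2)) * r1 + (-(a * (a - 1) * C ^ 2)) * r2
      + (-(a * S)) * r3 + (-L) * r4 + (-(L * c)) * r5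
      + (-(a * ((n:ℝ) - 2 + a) * S ^ ((n:ℝ) - 3 + a))) * hC
      + (-(S ^ ((n:ℝ) - 3 + a))) * f1 + (-(S ^ ((n:ℝ) - 3 + a) * S ^ 2)) * f2
  · rw [hu R]; ring
end

section
/- Let n ≥ 3 and let ψ : (0,R) → ℝ be smooth positive with ψ'' = -K ψ and (ψ')² = 1 - K ψ² (i.e., ψ = sin, Id, or sinh with K = 1, 0, -1). Then for every C¹ function ξ with ξ(R) = 0 such that φ := ξ ψ^{n/2 - 1} extends to a C¹ function vanishing at 0 and R, one has ∫₀^R ( ξ'² - ((n-2)²/4) ξ²/ψ² ) ψ^{n-1} dr = ∫₀^R φ'² ψ dr - (n(n-2)/4) K ∫₀^R φ² ψ dr. -/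
open Set
open MeasureTheory Filter

lemma aux_key (m : ℕ) (K x x' p p' s α c1 c2 : ℝ) (hp : p ≠ 0)
    (hα : α = ((m:ℝ)+1)/2)
    (hc1 : c1 = (((m:ℝ)+3) - 2)^2/4) (hc2 : c2 = ((m:ℝ)+3)*(((m:ℝ)+3)-2)/4)
    (hs2 : s^2*p = p^m) (hp' : p'^2 = 1 - K*p^2) :
    (x'^2 - c1 * x^2 / p^2) * p^(m+2)
      = (x'*(s*p) + x*(α * s * p'))^2 * p
        - c2*K*((x*(s*p))^2 * p)
        - α*(2*(x*(s*p))*(x'*(s*p) + x*(α*s*p'))*p' + (x*(s*p))^2*(-K*p)) := by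
  subst hα hc1 hc2
  have expand : (x'^2 - ((((m:ℝ)+3) - 2)^2/4) * x^2 / p^2) * p^(m+2)
      = (x'^2*p^2 - ((((m:ℝ)+3) - 2)^2/4)*x^2) * p^m := by
    field_simp; ring
  rw [expand]
  linear_combination
    (-((x'*p+((m:ℝ)+1)/2*x*p')^2 - ((m:ℝ)+3)*((m:ℝ)+1)/4*K*x^2*p^2
        - 2*(((m:ℝ)+1)/2)*x*(x'*p+((m:ℝ)+1)/2*x*p')*p' + ((m:ℝ)+1)/2*K*x^2*p^2)) * hs2
    + ((((m:ℝ)+1)/2)^2*x^2*p^(m)) * hp'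

lemma aux_intInt {R : ℝ} (hR : 0 < R) {f : ℝ → ℝ}
    (hf : ContinuousOn f (Ioo 0 R)) {C : ℝ} (hC : ∀ r ∈ Ioo 0 R, |f r| ≤ C) :
    IntervalIntegrable f volume 0 R := by
  rw [intervalIntegrable_iff_integrableOn_Ioo_of_le hR.le]
  refine ⟨hf.aestronglyMeasurable measurableSet_Ioo, ?_⟩
  refine HasFiniteIntegral.restrict_of_bounded (C := C) measure_Ioo_lt_top ?_
  exact (ae_restrict_iff' measurableSet_Ioo).2 (ae_of_all _ fun r hr => by
    simpa [Real.norm_eq_abs] using hC r hr)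

/-- The space-form substitution identity: if `ψ'' = -Kψ` and `(ψ')² = 1 - Kψ²` on `(0,R)`
(so `ψ = sin`, `Id`, or `sinh` with `K = 1, 0, -1`), `ξ` is `C¹` on `[0,R]` with `ξ(R)=0`,
and `Φ` is a `C¹` extension of `φ = ξ ψ^{n/2-1}` vanishing at `0` and `R`, then
`∫₀^R (ξ'² - ((n-2)²/4) ξ²/ψ²) ψ^{n-1} = ∫₀^R Φ'² ψ - (n(n-2)/4) K ∫₀^R Φ² ψ`. -/
theorem stmt_13 (n : ℕ) (hn : 3 ≤ n) (R : ℝ) (hR : 0 < R)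
    (K : ℝ) (hK : K ∈ ({-1, 0, 1} : Set ℝ))
    (ψ : ℝ → ℝ) (hψC : ContDiffOn ℝ 2 ψ (Ioo 0 R))
    (hψpos : ∀ r ∈ Ioo 0 R, 0 < ψ r)
    (hψ'' : ∀ r ∈ Ioo 0 R, deriv (deriv ψ) r = -K * ψ r)
    (hψ' : ∀ r ∈ Ioo 0 R, (deriv ψ r) ^ 2 = 1 - K * ψ r ^ 2)
    (ξ : ℝ → ℝ) (hξ : ContDiffOn ℝ 1 ξ (Icc 0 R)) (hξR : ξ R = 0)
    (Φ : ℝ → ℝ) (hΦ : ContDiffOn ℝ 1 Φ (Icc 0 R))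
    (hΦeq : ∀ r ∈ Ioo 0 R, Φ r = ξ r * ψ r ^ ((n : ℝ) / 2 - 1))
    (hΦ0 : Φ 0 = 0) (hΦR : Φ R = 0) :
    (∫ r in (0:ℝ)..R,
        ((deriv ξ r) ^ 2 - (((n : ℝ) - 2) ^ 2 / 4) * (ξ r) ^ 2 / (ψ r) ^ 2)
          * ψ r ^ (n - 1))
      = (∫ r in (0:ℝ)..R, (deriv Φ r) ^ 2 * ψ r)
        - ((n : ℝ) * ((n : ℝ) - 2) / 4) * K * ∫ r in (0:ℝ)..R, (Φ r) ^ 2 * ψ r := by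
  obtain ⟨m, rfl⟩ : ∃ m, n = m + 3 := ⟨n - 3, by omega⟩
  simp only [show m + 3 - 1 = m + 2 by omega]
  set S : Set ℝ := Ioo 0 R with hSdef
  have hSopen : IsOpen S := isOpen_Ioo
  have hSIcc : S ⊆ Icc 0 R := Ioo_subset_Icc_self
  have hKabs : |K| ≤ 1 := by
    simp only [mem_insert_iff, mem_singleton_iff] at hK
    rcases hK with h | h | h <;> rw [h] <;> norm_num
  -- differentiability facts
  have hψd : DifferentiableOn ℝ ψ S := hψC.differentiableOn (by norm_num)
  have hψat : ∀ r ∈ S, DifferentiableAt ℝ ψ r := fun r hr =>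
    (hψd r hr).differentiableAt (hSopen.mem_nhds hr)
  have hψcont : ContinuousOn ψ S := hψC.continuousOn
  have hψ'C : ContDiffOn ℝ 1 (deriv ψ) S := hψC.deriv_of_isOpen hSopen (by norm_num)
  have hψ'cont : ContinuousOn (deriv ψ) S := hψ'C.continuousOn
  have hψ'at : ∀ r ∈ S, DifferentiableAt ℝ (deriv ψ) r := fun r hr =>
    ((hψ'C.differentiableOn one_ne_zero) r hr).differentiableAt (hSopen.mem_nhds hr)
  have hξat : ∀ r ∈ S, DifferentiableAt ℝ ξ r := fun r hr =>
    ((hξ.differentiableOn one_ne_zero) r (hSIcc hr)).differentiableAt (Icc_mem_nhds hr.1 hr.2)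
  have hΦat : ∀ r ∈ S, DifferentiableAt ℝ Φ r := fun r hr =>
    ((hΦ.differentiableOn one_ne_zero) r (hSIcc hr)).differentiableAt (Icc_mem_nhds hr.1 hr.2)
  have hΦcont : ContinuousOn Φ S := (hΦ.continuousOn).mono hSIcc
  have hΦ'cont : ContinuousOn (deriv Φ) S :=
    (hΦ.mono hSIcc).continuousOn_deriv_of_isOpen hSopen le_rfl
  have hξ'cont : ContinuousOn (deriv ξ) S :=
    (hξ.mono hSIcc).continuousOn_deriv_of_isOpen hSopen le_rfl
  -- half point
  have hhalf : R/2 ∈ S := ⟨by linarith, by linarith⟩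
  -- bound on ψ via arsinh
  set g : ℝ → ℝ := fun r => Real.arsinh (ψ r) with hgdef
  have hgbd : ∀ r ∈ S, |ψ r| ≤ Real.sinh (|g (R/2)| + R) := by
    have hgd : ∀ r ∈ S, HasDerivWithinAt g
        ((Real.sqrt (1 + (ψ r)^2))⁻¹ * deriv ψ r) S r := by
      intro r hr
      have h0 := (Real.hasDerivAt_arsinh (ψ r)).comp r ((hψat r hr).hasDerivAt)
      exact h0.hasDerivWithinAt
    have hbound : ∀ r ∈ S, ‖(Real.sqrt (1 + (ψ r)^2))⁻¹ * deriv ψ r‖ ≤ 1 := by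
      intro r hr
      have hsq : (deriv ψ r)^2 ≤ 1 + (ψ r)^2 := by
        have h1 := hψ' r hr
        nlinarith [sq_nonneg (ψ r), abs_le.1 hKabs, sq_nonneg (K * ψ r)]
      have hsp : 0 < Real.sqrt (1 + (ψ r)^2) := Real.sqrt_pos.2 (by positivity)
      rw [Real.norm_eq_abs, abs_mul, abs_inv, abs_of_pos hsp]
      rw [inv_mul_le_iff₀ hsp, mul_one]
      exact (Real.le_sqrt (abs_nonneg _) (by positivity)).2 (by rwa [sq_abs])
    intro r hr
    have hlip := Convex.norm_image_sub_le_of_norm_hasDerivWithin_le hgd hbound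
      (convex_Ioo 0 R) hhalf hr
    have h1 : |g r - g (R/2)| ≤ 1 * |r - R/2| := by
      simpa [Real.norm_eq_abs] using hlip
    have h2 : |r - R/2| ≤ R := by
      rw [abs_le]; constructor <;> [linarith [hr.2, hr.1]; linarith [hr.2, hr.1]]
    have h3 : |g r| ≤ |g (R/2)| + R := by
      have := abs_sub_abs_le_abs_sub (g r) (g (R/2))
      linarith
    calc |ψ r| = |Real.sinh (g r)| := by rw [hgdef]; simp [Real.sinh_arsinh]
      _ = Real.sinh |g r| := Real.abs_sinh _
      _ ≤ Real.sinh (|g (R/2)| + R) := Real.sinh_le_sinh.2 h3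
  set Mψ : ℝ := Real.sinh (|g (R/2)| + R) with hMψdef
  have hMψ0 : 0 ≤ Mψ := by
    rw [hMψdef]; exact Real.sinh_nonneg_iff.2 (by positivity)
  -- bound on ψ'
  set Mψ' : ℝ := Real.sqrt (1 + Mψ^2) with hMψ'def
  have hMψ'0 : 0 ≤ Mψ' := Real.sqrt_nonneg _
  have hψ'bd : ∀ r ∈ S, |deriv ψ r| ≤ Mψ' := by
    intro r hr
    refine (Real.le_sqrt (abs_nonneg _) (by positivity)).2 ?_
    rw [sq_abs, hψ' r hr]
    have h1 := hgbd r hr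
    have h2 : ψ r ^ 2 ≤ Mψ ^ 2 := by
      rw [← sq_abs (ψ r)]
      exact pow_le_pow_left₀ (abs_nonneg _) h1 2
    have h3 : -K * ψ r ^ 2 ≤ 1 * ψ r ^ 2 := by
      have h4 : -K ≤ 1 := by have := abs_le.1 hKabs; linarith
      exact mul_le_mul_of_nonneg_right h4 (sq_nonneg _)
    linarith
  -- bounds on Φ and deriv Φ
  obtain ⟨MΦ, hMΦ⟩ := isCompact_Icc.exists_bound_of_continuousOn hΦ.continuousOn
  have hMΦS : ∀ r ∈ S, |Φ r| ≤ MΦ := fun r hr => by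
    simpa [Real.norm_eq_abs] using hMΦ r (hSIcc hr)
  have hMΦ0 : 0 ≤ MΦ := (abs_nonneg _).trans (hMΦS _ hhalf)
  obtain ⟨MΦ', hMΦ'⟩ := isCompact_Icc.exists_bound_of_continuousOn
    (hΦ.continuousOn_derivWithin (uniqueDiffOn_Icc hR) le_rfl)
  have hMΦ'S : ∀ r ∈ S, |deriv Φ r| ≤ MΦ' := fun r hr => by
    have h1 : derivWithin Φ (Icc 0 R) r = deriv Φ r :=
      derivWithin_of_mem_nhds (Icc_mem_nhds hr.1 hr.2)
    have := hMΦ' r (hSIcc hr)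
    rwa [Real.norm_eq_abs, h1] at this
  have hMΦ'0 : 0 ≤ MΦ' := (abs_nonneg _).trans (hMΦ'S _ hhalf)
  -- the exponent
  set αr : ℝ := ((m + 3 : ℕ) : ℝ)/2 - 1 with hαrdef
  -- the auxiliary functions
  set G : ℝ → ℝ := fun r => αr * ((Φ r)^2 * deriv ψ r) with hGdef
  set G' : ℝ → ℝ := fun r =>
    αr * (2 * Φ r * deriv Φ r * deriv ψ r + (Φ r)^2 * (-K * ψ r)) with hG'def
  have hGderiv : ∀ r ∈ S, HasDerivAt G (G' r) r := by
    intro r hr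
    have h1 : HasDerivAt (fun y => (Φ y)^2) (2 * Φ r * deriv Φ r) r := by
      simpa [mul_comm, mul_assoc] using ((hΦat r hr).hasDerivAt.fun_pow 2)
    have h2 := (hψ'at r hr).hasDerivAt
    have h3 := (h1.mul h2).const_mul αr
    have h4 : G' r = αr * ((2 * Φ r * deriv Φ r) * deriv ψ r
        + (Φ r)^2 * deriv (deriv ψ) r) := by
      simp only [hG'def]
      rw [hψ'' r hr]
    rw [h4]
    exact h3
  -- integrability
  have hintA : IntervalIntegrable (fun r => (deriv Φ r)^2 * ψ r) volume 0 R := by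
    refine aux_intInt hR (((hΦ'cont.pow 2)).mul hψcont) (C := MΦ'^2 * Mψ) ?_
    intro r hr
    have h1 := hMΦ'S r hr; have h2 := hgbd r hr
    rw [abs_mul, abs_pow]
    exact mul_le_mul (pow_le_pow_left₀ (abs_nonneg _) h1 2) h2 (abs_nonneg _) (by positivity)
  have hintB : IntervalIntegrable (fun r => (Φ r)^2 * ψ r) volume 0 R := by
    refine aux_intInt hR (((hΦcont.pow 2)).mul hψcont) (C := MΦ^2 * Mψ) ?_
    intro r hr
    have h1 := hMΦS r hr; have h2 := hgbd r hr
    rw [abs_mul, abs_pow]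
    exact mul_le_mul (pow_le_pow_left₀ (abs_nonneg _) h1 2) h2 (abs_nonneg _) (by positivity)
  have hintG' : IntervalIntegrable G' volume 0 R := by
    have hcont : ContinuousOn G' S := by
      rw [hG'def]
      exact continuousOn_const.mul
        ((((continuousOn_const.mul hΦcont).mul hΦ'cont).mul hψ'cont).add
          ((hΦcont.pow 2).mul ((continuousOn_const.mul hψcont))))
    refine aux_intInt hR hcont (C := |αr| * (2*MΦ*MΦ'*Mψ' + MΦ^2 * (1*Mψ))) ?_
    intro r hr
    simp only [hG'def]
    rw [abs_mul]
    refine mul_le_mul_of_nonneg_left ?_ (abs_nonneg αr)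
    refine (abs_add_le _ _).trans (add_le_add ?_ ?_)
    · rw [abs_mul, abs_mul, abs_mul, abs_two]
      have h1 := hMΦS r hr; have h2 := hMΦ'S r hr; have h3 := hψ'bd r hr
      gcongr <;> first | assumption | positivity
    · rw [abs_mul, abs_pow, abs_mul, abs_neg]
      have h1 := hMΦS r hr; have h2 := hgbd r hr
      gcongr <;> first | assumption | exact hKabs | positivity
  -- tendsto of G at the endpoints
  have hΦtend0 : Tendsto Φ (nhdsWithin 0 (Ioi (0:ℝ))) (nhds 0) := by
    have h1 : Tendsto Φ (nhdsWithin 0 (Icc 0 R)) (nhds 0) := by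
      have := hΦ.continuousOn 0 (left_mem_Icc.2 hR.le)
      rwa [ContinuousWithinAt, hΦ0] at this
    exact h1.mono_left (nhdsWithin_le_of_mem
      (mem_of_superset (Ioo_mem_nhdsGT_of_mem ⟨le_refl 0, hR⟩) hSIcc))
  have hΦtendR : Tendsto Φ (nhdsWithin R (Iio R)) (nhds 0) := by
    have h1 : Tendsto Φ (nhdsWithin R (Icc 0 R)) (nhds 0) := by
      have := hΦ.continuousOn R (right_mem_Icc.2 hR.le)
      rwa [ContinuousWithinAt, hΦR] at this
    exact h1.mono_left (nhdsWithin_le_of_mem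
      (mem_of_superset (Ioo_mem_nhdsLT_of_mem ⟨hR, le_refl R⟩) hSIcc))
  have hGsq : ∀ l : Filter ℝ, S ∈ l → Tendsto Φ l (nhds 0) → Tendsto G l (nhds 0) := by
    intro l hl hΦl
    have h2 : Tendsto (fun r => |αr| * Mψ' * (Φ r)^2) l (nhds 0) := by
      have := (hΦl.pow 2).const_mul (|αr| * Mψ')
      simpa using this
    refine squeeze_zero_norm' ?_ h2
    filter_upwards [hl] with r hr
    simp only [hGdef]
    rw [Real.norm_eq_abs, abs_mul, abs_mul, abs_of_nonneg (sq_nonneg (Φ r))]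
    have h3 := hψ'bd r hr
    calc |αr| * (Φ r ^ 2 * |deriv ψ r|)
        ≤ |αr| * (Φ r ^ 2 * Mψ') := by
          exact mul_le_mul_of_nonneg_left
            (mul_le_mul_of_nonneg_left h3 (sq_nonneg _)) (abs_nonneg _)
      _ = |αr| * Mψ' * Φ r ^ 2 := by ring
  have hG0 : Tendsto G (nhdsWithin 0 (Ioi (0:ℝ))) (nhds 0) :=
    hGsq _ (Ioo_mem_nhdsGT_of_mem ⟨le_refl 0, hR⟩) hΦtend0
  have hGR : Tendsto G (nhdsWithin R (Iio R)) (nhds 0) :=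
    hGsq _ (Ioo_mem_nhdsLT_of_mem ⟨hR, le_refl R⟩) hΦtendR
  have hI3 : (∫ r in (0:ℝ)..R, G' r) = 0 := by
    have := intervalIntegral.integral_eq_sub_of_hasDerivAt_of_tendsto hR hGderiv hintG' hG0 hGR
    simpa using this
  -- pointwise identity
  have hptw : ∀ r ∈ S,
      ((deriv ξ r) ^ 2 - (((m + 3 : ℕ) : ℝ) - 2) ^ 2 / 4 * (ξ r) ^ 2 / (ψ r) ^ 2)
          * ψ r ^ (m + 2)
        = (deriv Φ r)^2 * ψ r
          - (((m + 3 : ℕ) : ℝ) * (((m + 3 : ℕ) : ℝ) - 2) / 4) * K * ((Φ r)^2 * ψ r)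
          - G' r := by
    intro r hr
    have hpr := hψpos r hr
    have hsp : ψ r ^ (αr - 1) * ψ r = ψ r ^ αr := by
      have h0 := Real.rpow_add hpr (αr - 1) 1
      rw [Real.rpow_one] at h0
      rw [← h0]
      congr 1
      ring
    have hs2 : (ψ r ^ (αr - 1))^2 * ψ r = ψ r ^ m := by
      have h1 : (ψ r ^ (αr - 1))^2 = ψ r ^ ((αr-1)*2) := by
        rw [← Real.rpow_natCast (ψ r ^ (αr - 1)) 2, ← Real.rpow_mul hpr.le]
        norm_num
      calc (ψ r ^ (αr - 1))^2 * ψ r = ψ r ^ ((αr-1)*2) * ψ r ^ (1:ℝ) := by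
            rw [h1, Real.rpow_one]
        _ = ψ r ^ ((αr-1)*2 + 1) := (Real.rpow_add hpr _ _).symm
        _ = ψ r ^ ((m:ℕ):ℝ) := by
            congr 1
            rw [hαrdef]
            push_cast
            ring
        _ = ψ r ^ m := Real.rpow_natCast _ m
    have hΦr : Φ r = ξ r * (ψ r ^ (αr - 1) * ψ r) := by
      rw [hΦeq r hr, hsp]
    have hΦder : deriv Φ r
        = deriv ξ r * (ψ r ^ (αr - 1) * ψ r)
          + ξ r * (αr * ψ r ^ (αr - 1) * deriv ψ r) := by
      have heq : Φ =ᶠ[nhds r] fun y => ξ y * ψ y ^ αr := by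
        filter_upwards [hSopen.mem_nhds hr] with y hy
        exact hΦeq y hy
      have hpow : HasDerivAt (fun y => ψ y ^ αr)
          (αr * ψ r ^ (αr - 1) * deriv ψ r) r := by
        have h0 := (Real.hasDerivAt_rpow_const (x := ψ r) (p := αr)
          (Or.inl hpr.ne')).comp r ((hψat r hr).hasDerivAt)
        simpa [Function.comp_def, mul_assoc] using h0
      have hmul := ((hξat r hr).hasDerivAt.fun_mul hpow)
      rw [heq.deriv_eq, hmul.deriv, hsp]
    simp only [hG'def]
    rw [hΦder, hΦr]
    have := aux_key m K (ξ r) (deriv ξ r) (ψ r) (deriv ψ r) (ψ r ^ (αr - 1)) αr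
      ((((m + 3 : ℕ) : ℝ) - 2) ^ 2 / 4)
      (((m + 3 : ℕ) : ℝ) * (((m + 3 : ℕ) : ℝ) - 2) / 4)
      hpr.ne' (by rw [hαrdef]; push_cast; ring) (by push_cast; ring)
      (by push_cast; ring) hs2 (hψ' r hr)
    convert this using 2 <;> ring
  -- put everything together
  have hI1 : (∫ r in (0:ℝ)..R,
        ((deriv ξ r) ^ 2 - (((m + 3 : ℕ) : ℝ) - 2) ^ 2 / 4 * (ξ r) ^ 2 / (ψ r) ^ 2)
          * ψ r ^ (m + 2))
      = ∫ r in (0:ℝ)..R,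
          ((deriv Φ r)^2 * ψ r
            - (((m + 3 : ℕ) : ℝ) * (((m + 3 : ℕ) : ℝ) - 2) / 4) * K * ((Φ r)^2 * ψ r)
            - G' r) := by
    apply intervalIntegral.integral_congr_ae
    have hae : ∀ᵐ (y:ℝ) ∂volume, y ≠ R := by
      rw [ae_iff]
      simp [not_not]
    filter_upwards [hae] with y hy hy2
    rw [uIoc_of_le hR.le] at hy2
    exact hptw y ⟨hy2.1, lt_of_le_of_ne hy2.2 hy⟩
  have hI2 : (∫ r in (0:ℝ)..R,
        ((deriv Φ r)^2 * ψ r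
          - (((m + 3 : ℕ) : ℝ) * (((m + 3 : ℕ) : ℝ) - 2) / 4) * K * ((Φ r)^2 * ψ r)
          - G' r))
      = (∫ r in (0:ℝ)..R, (deriv Φ r)^2 * ψ r)
        - (((m + 3 : ℕ) : ℝ) * (((m + 3 : ℕ) : ℝ) - 2) / 4) * K
            * (∫ r in (0:ℝ)..R, (Φ r)^2 * ψ r)
        - (∫ r in (0:ℝ)..R, G' r) := by
    rw [intervalIntegral.integral_sub (hintA.sub (hintB.const_mul _)) hintG',
      intervalIntegral.integral_sub hintA (hintB.const_mul _),
      intervalIntegral.integral_const_mul]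
  rw [hI1, hI2, hI3]
  ring
end
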